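/- Let π be a linked partition in NCL(n), let A be a block of π, and let W be the unique block of π̂ with W ⊇ A. Then min(A) is singly-covered by π if and only if min(A) = min(W). -/

import Mathlib

open scoped Classical

/-- The minimum of a finset of naturals (`0` if empty). -/
noncomputable def fmin (A : Finset ℕ) : ℕ := sInf (A : Set ℕ)

/-- The maximum of a finset of naturals (`0` if empty). -/
noncomputable def fmax (A : Finset ℕ) : ℕ := sSup (A : Set ℕ)

/-- `α` is a partition of the finite set `F ⊆ ℕ`. -/
def IsPartitionOfSet (F : Finset ℕ) (α : Finset (Finset ℕ)) : Prop :=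
  (∀ V ∈ α, V.Nonempty) ∧ (∀ V ∈ α, V ⊆ F) ∧ (∀ m ∈ F, ∃ V ∈ α, m ∈ V) ∧
    ∀ V ∈ α, ∀ W ∈ α, V ≠ W → V ∩ W = ∅

/-- `α` is a partition of `{1,…,n}`. -/
def IsPartitionOf (n : ℕ) (α : Finset (Finset ℕ)) : Prop :=
  IsPartitionOfSet (Finset.Icc 1 n) α

/-- Two distinct blocks of the family `π` cross: there are `a < b < c < d` with
`a, c` in one block and `b, d` in a different block. -/
def IsCrossing (π : Finset (Finset ℕ)) : Prop :=
  ∃ A ∈ π, ∃ B ∈ π, A ≠ B ∧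
    ∃ a ∈ A, ∃ b ∈ B, ∃ c ∈ A, ∃ d ∈ B, a < b ∧ b < c ∧ c < d

/-- `α ∈ NC(n)`: a non-crossing partition of `{1,…,n}`. -/
def IsNCPartition (n : ℕ) (α : Finset (Finset ℕ)) : Prop :=
  IsPartitionOf n α ∧ ¬ IsCrossing α

/-- Reverse refinement order `α ≤ β`: every block of `α` is contained in a block of `β`
(equivalently, every block of `β` is a union of blocks of `α`). -/
def Refines (α β : Finset (Finset ℕ)) : Prop := ∀ V ∈ α, ∃ W ∈ β, V ⊆ W

/-- The partial order `α ≪ β`: `α ≤ β` and for every block `W` of `β` there is a block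
`V` of `α` containing both `min W` and `max W`. -/
def LL (α β : Finset (Finset ℕ)) : Prop :=
  Refines α β ∧ ∀ W ∈ β, ∃ V ∈ α, fmin W ∈ V ∧ fmax W ∈ V

/-- A block `V` (of `α`) is `β`-special: some block `W` of `β` has the same min and max. -/
def SpecialBlock (β : Finset (Finset ℕ)) (V : Finset ℕ) : Prop :=
  ∃ W ∈ β, fmin V = fmin W ∧ fmax V = fmax W

/-- `V` is an outer block of `α`: no block of `α` strictly nests around it. -/
def OuterBlock (α : Finset (Finset ℕ)) (V : Finset ℕ) : Prop :=
  ∀ V' ∈ α, ¬ (fmin V' < fmin V ∧ fmax V < fmax V')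

/-- `π` is a linked partition of the finite set `F ⊆ ℕ`. -/
def IsLinkedPartitionOfSet (F : Finset ℕ) (π : Finset (Finset ℕ)) : Prop :=
  (∀ A ∈ π, A.Nonempty) ∧ (∀ A ∈ π, A ⊆ F) ∧ (∀ m ∈ F, ∃ A ∈ π, m ∈ A) ∧
    ∀ A ∈ π, ∀ B ∈ π, A ≠ B →
      A ∩ B = ∅ ∨
        (2 ≤ A.card ∧ 2 ≤ B.card ∧ (A ∩ B).card = 1 ∧ fmin A ≠ fmin B ∧
          ∀ x ∈ A ∩ B, x = fmin A ∨ x = fmin B)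

/-- `π ∈ NCL(F)`: a non-crossing linked partition of the finite set `F`. -/
def IsNCLOfSet (F : Finset ℕ) (π : Finset (Finset ℕ)) : Prop :=
  IsLinkedPartitionOfSet F π ∧ ¬ IsCrossing π

/-- `π ∈ NCL(n)`: a non-crossing linked partition of `{1,…,n}`. -/
def IsNCL (n : ℕ) (π : Finset (Finset ℕ)) : Prop :=
  IsNCLOfSet (Finset.Icc 1 n) π

/-- The number of blocks of `π` containing `m`. -/
noncomputable def coverCount (π : Finset (Finset ℕ)) (m : ℕ) : ℕ :=
  (π.filter fun A => m ∈ A).card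

/-- `m` is singly-covered by `π`: it lies in exactly one block. -/
def SinglyCovered (π : Finset (Finset ℕ)) (m : ℕ) : Prop := coverCount π m = 1

/-- `m` is doubly-covered by `π`: it lies in exactly two blocks. -/
def DoublyCovered (π : Finset (Finset ℕ)) (m : ℕ) : Prop := coverCount π m = 2

/-- The partition `π̂` generated by the blocks of `π`: its blocks are the connected
components of the ground set under the relation of lying in a common block of `π`. -/
noncomputable def genPart (π : Finset (Finset ℕ)) : Finset (Finset ℕ) :=
  (π.sup id).image fun m =>
    (π.sup id).filter fun x =>
      Relation.EqvGen (fun a b => ∃ A ∈ π, a ∈ A ∧ b ∈ A) m x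

/-- The unlinking `π̌` of a linked partition `π`. -/
noncomputable def unlink (π : Finset (Finset ℕ)) : Finset (Finset ℕ) :=
  π.image fun A => if SinglyCovered π (fmin A) then A else A.erase (fmin A)

/-- The block of `α` containing `m` (empty if there is none). -/
noncomputable def blockOf (α : Finset (Finset ℕ)) (m : ℕ) : Finset ℕ :=
  (α.filter fun V => m ∈ V).sup id

/-- The successor of `m` in the cycle on the block `V` (elements in increasing order). -/
noncomputable def nextInBlock (V : Finset ℕ) (m : ℕ) : ℕ :=
  if m = fmax V then fmin V else fmin (V.filter fun x => m < x)

/-- The predecessor of `m` in the cycle on the block `V`. -/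
noncomputable def prevInBlock (V : Finset ℕ) (m : ℕ) : ℕ :=
  if m = fmin V then fmax V else fmax (V.filter fun x => x < m)

/-- The permutation `P_α` associated to a partition `α`, as a function: each block
`{i₁ < i₂ < ⋯ < iₘ}` becomes the cycle `i₁ ↦ i₂ ↦ ⋯ ↦ iₘ ↦ i₁`. -/
noncomputable def permOf (α : Finset (Finset ℕ)) (m : ℕ) : ℕ :=
  if m ∈ blockOf α m then nextInBlock (blockOf α m) m else m

/-- The inverse permutation `P_α⁻¹`, as a function. -/
noncomputable def permOfInv (α : Finset (Finset ℕ)) (m : ℕ) : ℕ :=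
  if m ∈ blockOf α m then prevInBlock (blockOf α m) m else m

/-- The action `τ·α` of a map `τ` on a partition `α = {V₁,…,V_p}`, giving
`{τ(V₁),…,τ(V_p)}`. -/
def mapPart (τ : ℕ → ℕ) (α : Finset (Finset ℕ)) : Finset (Finset ℕ) :=
  α.image fun V => V.image τ

/-- The cycled unlinking `π° := P_{π̂}⁻¹ · π̌`. -/
noncomputable def cycUnlink (π : Finset (Finset ℕ)) : Finset (Finset ℕ) :=
  mapPart (permOfInv (genPart π)) (unlink π)

/-- `NC(n)` as a finset. -/
noncomputable def NCF (n : ℕ) : Finset (Finset (Finset ℕ)) :=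
  ((Finset.Icc 1 n).powerset.powerset).filter (IsNCPartition n)

/-- `NCL(n)` as a finset. -/
noncomputable def NCLF (n : ℕ) : Finset (Finset (Finset ℕ)) :=
  ((Finset.Icc 1 n).powerset.powerset).filter (IsNCL n)

/-- The restriction `π|_E`: the blocks of `π` contained in `E`. -/
def restrictL (π : Finset (Finset ℕ)) (E : Finset ℕ) : Finset (Finset ℕ) :=
  π.filter fun A => A ⊆ E

/-- The partition `β₀` obtained from `β` by leaving blocks of size `≤ 2` intact and
breaking each block `W` with `|W| ≥ 3` into the doubleton `{min W, max W}` together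
with `|W| - 2` singletons. -/
noncomputable def breakBlocks (β : Finset (Finset ℕ)) : Finset (Finset ℕ) :=
  β.biUnion fun W =>
    if W.card ≤ 2 then {W}
    else insert {fmin W, fmax W} ((W \ {fmin W, fmax W}).image fun x => ({x} : Finset ℕ))


/-! ### Auxiliary lemmas for `stmt14` -/

lemma fmin_mem' {A : Finset ℕ} (h : A.Nonempty) : fmin A ∈ A := by
  have h' : (A : Set ℕ).Nonempty := by exact_mod_cast h
  have := Nat.sInf_mem h'
  simpa [fmin] using this

lemma fmin_le' {A : Finset ℕ} {a : ℕ} (h : a ∈ A) : fmin A ≤ a :=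
  Nat.sInf_le (by simpa using h)

lemma pair_min' {F : Finset ℕ} {π : Finset (Finset ℕ)} (hπ : IsLinkedPartitionOfSet F π)
    {D E : Finset ℕ} (hD : D ∈ π) (hE : E ∈ π) (hne : D ≠ E) {x : ℕ}
    (hxD : x ∈ D) (hxE : x ∈ E) :
    fmin D ≠ fmin E ∧ (x = fmin D ∨ x = fmin E) := by
  rcases hπ.2.2.2 D hD E hE hne with h | h
  · exfalso
    have hx : x ∈ D ∩ E := Finset.mem_inter.mpr ⟨hxD, hxE⟩
    rw [h] at hx
    exact absurd hx (Finset.notMem_empty x)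
  · exact ⟨h.2.2.2.1, h.2.2.2.2 x (Finset.mem_inter.mpr ⟨hxD, hxE⟩)⟩

lemma two_blocks' {F : Finset ℕ} {π : Finset (Finset ℕ)} (hπ : IsLinkedPartitionOfSet F π)
    {D E G : Finset ℕ} (hD : D ∈ π) (hE : E ∈ π) (hG : G ∈ π) (hDE : D ≠ E) {x : ℕ}
    (hxD : x ∈ D) (hxE : x ∈ E) (hxG : x ∈ G) : G = D ∨ G = E := by
  by_contra hcon
  push_neg at hcon
  obtain ⟨hGD, hGE⟩ := hcon
  obtain ⟨h1, h2⟩ := pair_min' hπ hD hE hDE hxD hxE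
  obtain ⟨h3, h4⟩ := pair_min' hπ hD hG (Ne.symm hGD) hxD hxG
  obtain ⟨h5, h6⟩ := pair_min' hπ hE hG (Ne.symm hGE) hxE hxG
  rcases h2 with h2 | h2 <;> rcases h4 with h4 | h4 <;> rcases h6 with h6 | h6 <;> omega

lemma singly_unique' {π : Finset (Finset ℕ)} {x : ℕ} (hs : SinglyCovered π x)
    {D E : Finset ℕ} (hD : D ∈ π) (hE : E ∈ π) (hxD : x ∈ D) (hxE : x ∈ E) : D = E := by
  unfold SinglyCovered coverCount at hs
  obtain ⟨C, hC⟩ := Finset.card_eq_one.mp hs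
  have h1 : D ∈ π.filter (fun A => x ∈ A) := Finset.mem_filter.mpr ⟨hD, hxD⟩
  have h2 : E ∈ π.filter (fun A => x ∈ A) := Finset.mem_filter.mpr ⟨hE, hxE⟩
  rw [hC, Finset.mem_singleton] at h1 h2
  rw [h1, h2]

lemma eqvGen_rtg' {α : Type*} {r : α → α → Prop} (hsym : Symmetric r) {a b : α}
    (h : Relation.EqvGen r a b) : Relation.ReflTransGen r a b := by
  induction h with
  | rel x y h => exact Relation.ReflTransGen.single h
  | refl x => exact Relation.ReflTransGen.refl
  | symm x y h ih => haveI : Std.Symm r := ⟨fun a b h => hsym h⟩; exact Std.Symm.symm _ _ ih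
  | trans x y z h1 h2 ih1 ih2 => exact ih1.trans ih2

/-- Let `π ∈ NCL(n)`, let `A` be a block of `π`, and let `W` be the
(unique) block of `π̂` with `W ⊇ A`. Then `min A` is singly-covered by `π` if and only
if `min A = min W`. -/
theorem stmt14 (n : ℕ) (π : Finset (Finset ℕ)) (hπ : IsNCL n π)
    (A : Finset ℕ) (hA : A ∈ π)
    (W : Finset ℕ) (hW : W ∈ genPart π) (hAW : A ⊆ W) :
    SinglyCovered π (fmin A) ↔ fmin A = fmin W := by
  obtain ⟨hlp, hnc⟩ := hπ
  obtain ⟨hne, hsub, hcov, hint⟩ := id hlp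
  rw [genPart, Finset.mem_image] at hW
  obtain ⟨m, hm, hWeq⟩ := hW
  have hWmem : ∀ x : ℕ, x ∈ W ↔ x ∈ π.sup id ∧
      Relation.EqvGen (fun a b => ∃ A ∈ π, a ∈ A ∧ b ∈ A) m x := by
    intro x
    constructor
    · intro hx; rw [← hWeq] at hx; exact Finset.mem_filter.mp hx
    · intro hx; rw [← hWeq]; exact Finset.mem_filter.mpr hx
  have hclos : ∀ B ∈ π, ∀ y, y ∈ B → y ∈ W → B ⊆ W := by
    intro B hB y hyB hyW z hzB
    rw [hWmem] at hyW ⊢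
    exact ⟨Finset.mem_sup.mpr ⟨B, hB, hzB⟩,
      Relation.EqvGen.trans _ _ _ hyW.2 (Relation.EqvGen.rel _ _ ⟨B, hB, hyB, hzB⟩)⟩
  have hAne := hne A hA
  have hminA_mem : fmin A ∈ A := fmin_mem' hAne
  have hminA_W : fmin A ∈ W := hAW hminA_mem
  have hW_ne : W.Nonempty := ⟨fmin A, hminA_W⟩
  have hminW_mem : fmin W ∈ W := fmin_mem' hW_ne
  have hminW_le : ∀ x ∈ W, fmin W ≤ x := fun x hx => fmin_le' hx
  obtain ⟨B0, hB0, hminW_B0⟩ := Finset.mem_sup.mp ((hWmem _).mp hminW_mem).1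
  have hB0W : B0 ⊆ W := hclos B0 hB0 _ hminW_B0 hminW_mem
  have hminB0 : fmin B0 = fmin W :=
    le_antisymm (fmin_le' hminW_B0) (hminW_le _ (hB0W (fmin_mem' (hne B0 hB0))))
  have hB0singly : SinglyCovered π (fmin W) := by
    unfold SinglyCovered coverCount
    rw [Finset.card_eq_one]
    refine ⟨B0, ?_⟩
    ext D
    simp only [Finset.mem_filter, Finset.mem_singleton]
    constructor
    · rintro ⟨hD, hxD⟩
      by_contra hDB0
      have hp := pair_min' hlp hD hB0 hDB0 hxD hminW_B0
      have hDW : D ⊆ W := hclos D hD _ hxD hminW_mem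
      have h1 : fmin W ≤ fmin D := hminW_le _ (hDW (fmin_mem' (hne D hD)))
      have h2 : fmin D ≤ fmin W := fmin_le' hxD
      have h3 : fmin D = fmin W := le_antisymm h2 h1
      rw [hminB0] at hp
      exact hp.1 h3
    · rintro rfl; exact ⟨hB0, hminW_B0⟩
  constructor
  · -- forward direction
    intro hsingle
    have hw1 : Relation.EqvGen (fun a b => ∃ A ∈ π, a ∈ A ∧ b ∈ A) m (fmin W) :=
      ((hWmem _).mp hminW_mem).2
    have hw2 : Relation.EqvGen (fun a b => ∃ A ∈ π, a ∈ A ∧ b ∈ A) m (fmin A) :=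
      ((hWmem _).mp hminA_W).2
    have hwalk : Relation.EqvGen (fun a b => ∃ A ∈ π, a ∈ A ∧ b ∈ A) (fmin W) (fmin A) :=
      Relation.EqvGen.trans _ _ _ (Relation.EqvGen.symm _ _ hw1) hw2
    have hsymR : Symmetric (fun a b => ∃ A ∈ π, a ∈ A ∧ b ∈ A) := by
      rintro a b ⟨B, hB, h1, h2⟩; exact ⟨B, hB, h2, h1⟩
    have hrtg : Relation.ReflTransGen (fun a b => ∃ A ∈ π, a ∈ A ∧ b ∈ A)
        (fmin W) (fmin A) := eqvGen_rtg' hsymR hwalk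
    have hJ : ∀ x : ℕ, Relation.ReflTransGen (fun a b => ∃ A ∈ π, a ∈ A ∧ b ∈ A)
        (fmin W) x → ∀ D ∈ π, x ∈ D →
        Relation.ReflTransGen (fun X Y => Y ∈ π ∧ Y ≠ X ∧ fmin X ∈ Y) D B0 := by
      intro x hx
      induction hx with
      | refl =>
        intro D hD hxD
        have : D = B0 := singly_unique' hB0singly hD hB0 hxD hminW_B0
        rw [this]
      | tail hab hbc ih =>
        intro E hE hyE
        obtain ⟨D, hD, hxD, hyD⟩ := hbc
        have hRD := ih D hD hxD
        by_cases hED : E = D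
        · rw [hED]; exact hRD
        · have hp := pair_min' hlp hD hE (Ne.symm hED) hyD hyE
          rcases hp.2 with hy | hy
          · -- y = fmin D
            have hminD_D : fmin D ∈ D := hy ▸ hyD
            have hminD_E : fmin D ∈ E := hy ▸ hyE
            have hDB0 : D ≠ B0 := by
              rintro rfl
              have hWE : fmin W ∈ E := by rw [← hminB0]; exact hminD_E
              exact hED (singly_unique' hB0singly hE hB0 hWE hminW_B0)
            rcases Relation.ReflTransGen.cases_head hRD with heq | ⟨G, hG, hRG⟩
            · exact absurd heq hDB0
            · obtain ⟨hGπ, hGD, hminDG⟩ := hG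
              rcases two_blocks' hlp hD hE hGπ (Ne.symm hED) hminD_D hminD_E hminDG with
                h | h
              · exact absurd h hGD
              · rw [← h]; exact hRG
          · -- y = fmin E
            exact Relation.ReflTransGen.head ⟨hD, Ne.symm hED, hy ▸ hyD⟩ hRD
    have hRA := hJ (fmin A) hrtg A hA hminA_mem
    rcases Relation.ReflTransGen.cases_head hRA with heq | ⟨G, ⟨hGπ, hGA, hminAG⟩, _⟩
    · rw [heq, hminB0]
    · exact absurd (singly_unique' hsingle hGπ hA hminAG hminA_mem) hGA
  · intro heq
    rw [heq]
    exact hB0singly
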